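/- Let (Ω, μ) be a measure space, A ⊆ Ω measurable with μ(A) ≠ 0. Let φ₁, φ₂ : [0,∞) → [0,∞) be continuous, strictly increasing with φᵢ(0)=0, φᵢ(1)=1, lim_{t→∞}φᵢ(t)=∞, and (φ₁)'_l(1) exists and is positive. Let p₁ : Ω → (0,∞) and p₂ : Ω → [0,∞) be measurable with ∫_A p₁ dμ < ∞ and sup_{x∈A} p₂(x)/p₁(x) < a₁ for some finite constant a₁. For ε > 0 let p₁ +̃_{φ,ε} p₂ be defined pointwise by φ₁(p₁/λ) + ε φ₂(p₂/λ) = 1. Then (φ₁)'_l(1) · lim_{ε→0⁺} [∫_A (p₁ +̃_{φ,ε} p₂) dμ − ∫_A p₁ dμ]/ε = ∫_A φ₂(p₂(x)/p₁(x)) p₁(x) dμ(x). -/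

import Mathlib

open Filter Set MeasureTheory Topology

theorem f_divergence_as_first_variation
    {Ω : Type*} [MeasurableSpace Ω] (μ : Measure Ω)
    (A : Set Ω) (hA : MeasurableSet A) (hA0 : μ A ≠ 0)
    (φ₁ φ₂ : ℝ → ℝ)
    (hc₁ : ContinuousOn φ₁ (Set.Ici 0)) (hc₂ : ContinuousOn φ₂ (Set.Ici 0))
    (hm₁ : StrictMonoOn φ₁ (Set.Ici 0)) (hm₂ : StrictMonoOn φ₂ (Set.Ici 0))
    (h01 : φ₁ 0 = 0) (h02 : φ₂ 0 = 0)
    (h11 : φ₁ 1 = 1) (h12 : φ₂ 1 = 1)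
    (hl₁ : Tendsto φ₁ atTop atTop) (hl₂ : Tendsto φ₂ atTop atTop)
    (d : ℝ) (hd : 0 < d)
    (hderiv : HasDerivWithinAt φ₁ d (Set.Iio 1) 1)
    (p₁ p₂ : Ω → ℝ) (hp₁m : Measurable p₁) (hp₂m : Measurable p₂)
    (hp₁0 : ∀ x, 0 < p₁ x) (hp₂0 : ∀ x, 0 ≤ p₂ x)
    (hp₁i : IntegrableOn p₁ A μ)
    (a₁ : ℝ) (hbound : ∀ x ∈ A, p₂ x / p₁ x < a₁)
    (F : ℝ → Ω → ℝ)
    (hF : ∀ ε : ℝ, 0 < ε → ∀ x : Ω,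
      0 < F ε x ∧ φ₁ (p₁ x / F ε x) + ε * φ₂ (p₂ x / F ε x) = 1) :
    Tendsto
      (fun ε => ((∫ x in A, F ε x ∂μ) - ∫ x in A, p₁ x ∂μ) / ε)
      (nhdsWithin 0 (Set.Ioi 0))
      (nhds (d⁻¹ * ∫ x in A, φ₂ (p₂ x / p₁ x) * p₁ x ∂μ)) := by
  have hmono₁ : MonotoneOn φ₁ (Ici 0) := hm₁.monotoneOn
  have hmono₂ : MonotoneOn φ₂ (Ici 0) := hm₂.monotoneOn
  have hφ₂nn : ∀ y : ℝ, 0 ≤ y → 0 ≤ φ₂ y := by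
    intro y hy
    have := hmono₂ (self_mem_Ici) hy hy
    rwa [h02] at this
  -- a₁ > 0
  obtain ⟨x₀, hx₀⟩ : ∃ x, x ∈ A := nonempty_of_measure_ne_zero hA0
  have ha₁ : 0 < a₁ :=
    lt_of_le_of_lt (div_nonneg (hp₂0 x₀) (hp₁0 x₀).le) (hbound x₀ hx₀)
  -- basic facts about F
  have hFpos : ∀ ε : ℝ, 0 < ε → ∀ x, 0 < F ε x := fun ε hε x => (hF ε hε x).1
  have heq : ∀ ε : ℝ, 0 < ε → ∀ x,
      φ₁ (p₁ x / F ε x) + ε * φ₂ (p₂ x / F ε x) = 1 := fun ε hε x => (hF ε hε x).2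
  have hFge : ∀ ε : ℝ, 0 < ε → ∀ x, p₁ x ≤ F ε x := by
    intro ε hε x
    by_contra h
    push_neg at h
    have h1 : 1 < p₁ x / F ε x := (one_lt_div (hFpos ε hε x)).2 h
    have h2 : φ₁ 1 < φ₁ (p₁ x / F ε x) :=
      hm₁ (by norm_num) (le_of_lt (lt_trans one_pos h1)) h1
    have h3 : 0 ≤ ε * φ₂ (p₂ x / F ε x) :=
      mul_nonneg hε.le (hφ₂nn _ (div_nonneg (hp₂0 x) (hFpos ε hε x).le))
    have := heq ε hε x
    rw [h11] at h2
    linarith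
  have htpos : ∀ ε : ℝ, 0 < ε → ∀ x, 0 < p₁ x / F ε x :=
    fun ε hε x => div_pos (hp₁0 x) (hFpos ε hε x)
  have htle1 : ∀ ε : ℝ, 0 < ε → ∀ x, p₁ x / F ε x ≤ 1 :=
    fun ε hε x => (div_le_one (hFpos ε hε x)).2 (hFge ε hε x)
  have hkey : ∀ ε : ℝ, 0 < ε → ∀ x,
      1 - φ₁ (p₁ x / F ε x) = ε * φ₂ (p₂ x / F ε x) := by
    intro ε hε x
    have := heq ε hε x
    linarith
  have hFeq : ∀ ε : ℝ, 0 < ε → ∀ x, F ε x = p₁ x / (p₁ x / F ε x) := by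
    intro ε hε x
    rw [eq_div_iff (htpos ε hε x).ne']
    field_simp
    rw [mul_comm (F ε x) (p₁ x), mul_div_assoc, div_self (hFpos ε hε x).ne', mul_one]
  have hdivle : ∀ ε : ℝ, 0 < ε → ∀ x, p₂ x / F ε x ≤ p₂ x / p₁ x := by
    intro ε hε x
    exact div_le_div_of_nonneg_left (hp₂0 x) (hp₁0 x) (hFge ε hε x)
  have hφ₂le : ∀ ε : ℝ, 0 < ε → ∀ x, φ₂ (p₂ x / F ε x) ≤ φ₂ (p₂ x / p₁ x) := by
    intro ε hε x
    exact hmono₂ (div_nonneg (hp₂0 x) (hFpos ε hε x).le)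
      (div_nonneg (hp₂0 x) (hp₁0 x).le) (hdivle ε hε x)
  -- pointwise convergence of t = p₁/F to 1
  have htto1 : ∀ x, Tendsto (fun ε => p₁ x / F ε x) (𝓝[>] (0:ℝ)) (𝓝 1) := by
    intro x
    rw [Metric.tendsto_nhds]
    intro δ hδ
    set δ' : ℝ := min δ (1/2) with hδ'def
    have hδ'pos : 0 < δ' := lt_min hδ (by norm_num)
    have hδ'lt1 : δ' < 1 := lt_of_le_of_lt (min_le_right _ _) (by norm_num)
    have hb0 : (0:ℝ) ≤ 1 - δ' := by linarith
    have hφb : φ₁ (1 - δ') < 1 := by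
      have := hm₁ (mem_Ici.2 hb0) (mem_Ici.2 zero_le_one) (by linarith)
      rwa [h11] at this
    set c := 1 - φ₁ (1 - δ') with hcdef
    have hcpos : 0 < c := by simp only [hcdef]; linarith
    set C := φ₂ (p₂ x / p₁ x) with hCdef
    have hCnn : 0 ≤ C := hφ₂nn _ (div_nonneg (hp₂0 x) (hp₁0 x).le)
    have hmem : Ioo (0:ℝ) (c / (C + 1)) ∈ 𝓝[>] (0:ℝ) :=
      Ioo_mem_nhdsGT_of_mem ⟨le_refl 0, div_pos hcpos (by linarith)⟩
    filter_upwards [hmem] with ε hε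
    obtain ⟨hε0, hεlt⟩ := hε
    have h1 : ε * φ₂ (p₂ x / F ε x) ≤ ε * C :=
      mul_le_mul_of_nonneg_left (hφ₂le ε hε0 x) hε0.le
    have h2 : ε * C < c := by
      calc ε * C ≤ ε * (C + 1) := by nlinarith
        _ < (c / (C + 1)) * (C + 1) := by
            apply mul_lt_mul_of_pos_right hεlt; linarith
        _ = c := div_mul_cancel₀ c (by linarith)
    have h3 : 1 - φ₁ (p₁ x / F ε x) < c := lt_of_le_of_lt (hkey ε hε0 x ▸ h1) h2
    have h4 : φ₁ (1 - δ') < φ₁ (p₁ x / F ε x) := by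
      simp only [hcdef] at h3; linarith
    have h5 : 1 - δ' < p₁ x / F ε x := by
      by_contra hcon
      push_neg at hcon
      exact absurd (hmono₁ (le_of_lt (htpos ε hε0 x)) (mem_Ici.2 hb0) hcon)
        (not_le.2 h4)
    have h6 : p₁ x / F ε x ≤ 1 := htle1 ε hε0 x
    rw [Real.dist_eq, abs_of_nonpos (by linarith)]
    have : δ' ≤ δ := min_le_left _ _
    linarith
  have hFlim : ∀ x, Tendsto (fun ε => F ε x) (𝓝[>] (0:ℝ)) (𝓝 (p₁ x)) := by
    intro x
    have h := (tendsto_const_nhds (x := p₁ x)).div (htto1 x) one_ne_zero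
    rw [div_one] at h
    apply h.congr'
    filter_upwards [self_mem_nhdsWithin] with ε hε
    exact (hFeq ε hε x).symm
  -- pointwise limit of the difference quotient
  have hptlim : ∀ x, Tendsto (fun ε => (F ε x - p₁ x) / ε) (𝓝[>] (0:ℝ))
      (𝓝 (d⁻¹ * (φ₂ (p₂ x / p₁ x) * p₁ x))) := by
    intro x
    rcases eq_or_lt_of_le (hp₂0 x) with hp2 | hp2
    · -- p₂ x = 0 : the quotient is identically 0
      have hz : ∀ ε : ℝ, 0 < ε → F ε x = p₁ x := by
        intro ε hε
        have h1 : φ₂ (p₂ x / F ε x) = 0 := by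
          rw [← hp2, zero_div, h02]
        have h2 : φ₁ (p₁ x / F ε x) = 1 := by
          have := heq ε hε x
          rw [h1] at this; linarith
        have h3 : p₁ x / F ε x = 1 := by
          apply hm₁.injOn (le_of_lt (htpos ε hε x)) (mem_Ici.2 zero_le_one)
          rw [h2, h11]
        have := hFeq ε hε x
        rw [h3, div_one] at this
        exact this
      have : (d⁻¹ * (φ₂ (p₂ x / p₁ x) * p₁ x)) = 0 := by
        rw [← hp2, zero_div, h02]; ring
      rw [this]
      apply Tendsto.congr' _ tendsto_const_nhds
      filter_upwards [self_mem_nhdsWithin] with ε hε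
      rw [hz ε hε]; simp
    · -- p₂ x > 0
      set r := p₂ x / p₁ x with hrdef
      have hr : 0 < r := div_pos hp2 (hp₁0 x)
      have htlt1 : ∀ ε : ℝ, 0 < ε → p₁ x / F ε x < 1 := by
        intro ε hε
        have hφpos : 0 < φ₂ (p₂ x / F ε x) := by
          have := hm₂ self_mem_Ici (le_of_lt (div_pos hp2 (hFpos ε hε x)))
            (div_pos hp2 (hFpos ε hε x))
          rwa [h02] at this
        have h1 : φ₁ (p₁ x / F ε x) < 1 := by
          have := heq ε hε x; nlinarith
        rcases lt_or_eq_of_le (htle1 ε hε x) with h | h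
        · exact h
        · rw [h, h11] at h1; linarith
      have htto1' : Tendsto (fun ε => p₁ x / F ε x) (𝓝[>] (0:ℝ)) (𝓝[<] (1:ℝ)) := by
        rw [tendsto_nhdsWithin_iff]
        refine ⟨htto1 x, ?_⟩
        filter_upwards [self_mem_nhdsWithin] with ε hε
        exact htlt1 ε hε
      have hslope : Tendsto (slope φ₁ 1) (𝓝[<] (1:ℝ)) (𝓝 d) := by
        have := hasDerivWithinAt_iff_tendsto_slope.1 hderiv
        rwa [show (Iio (1:ℝ)) \ {1} = Iio 1 by
          rw [diff_singleton_eq_self]; simp] at this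
      have hmid : Tendsto (fun ε => (1 - p₁ x / F ε x) / (1 - φ₁ (p₁ x / F ε x)))
          (𝓝[>] (0:ℝ)) (𝓝 d⁻¹) := by
        have h1 : Tendsto (fun ε => slope φ₁ 1 (p₁ x / F ε x)) (𝓝[>] (0:ℝ)) (𝓝 d) :=
          hslope.comp htto1'
        have h2 := h1.inv₀ hd.ne'
        apply h2.congr
        intro ε
        rw [slope_def_field, h11, inv_div]
        rw [← neg_div_neg_eq]
        ring_nf
      have hφ₂lim : Tendsto (fun ε => φ₂ (p₂ x / F ε x)) (𝓝[>] (0:ℝ)) (𝓝 (φ₂ r)) := by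
        have hdivlim : Tendsto (fun ε => p₂ x / F ε x) (𝓝[>] (0:ℝ)) (𝓝 r) :=
          tendsto_const_nhds.div (hFlim x) (hp₁0 x).ne'
        have hcont : ContinuousAt φ₂ r := hc₂.continuousAt (Ici_mem_nhds hr)
        exact hcont.tendsto.comp hdivlim
      have h1 : Tendsto (fun ε => p₁ x / (p₁ x / F ε x)) (𝓝[>] (0:ℝ)) (𝓝 (p₁ x)) := by
        have := (tendsto_const_nhds (x := p₁ x)).div (htto1 x) one_ne_zero
        rwa [div_one] at this
      have hfrac : Tendsto (fun ε => (p₁ x / (p₁ x / F ε x)) *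
          ((1 - p₁ x / F ε x) / (1 - φ₁ (p₁ x / F ε x))) * φ₂ (p₂ x / F ε x))
          (𝓝[>] (0:ℝ)) (𝓝 (d⁻¹ * (φ₂ r * p₁ x))) := by
        have := (h1.mul hmid).mul hφ₂lim
        have heqv : p₁ x * d⁻¹ * φ₂ r = d⁻¹ * (φ₂ r * p₁ x) := by ring
        rwa [heqv] at this
      apply hfrac.congr'
      filter_upwards [self_mem_nhdsWithin] with ε hε
      have ht1 : p₁ x / F ε x ≠ 0 := (htpos ε hε x).ne'
      have hφpos : 0 < φ₂ (p₂ x / F ε x) := by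
        have := hm₂ self_mem_Ici (le_of_lt (div_pos hp2 (hFpos ε hε x)))
          (div_pos hp2 (hFpos ε hε x))
        rwa [h02] at this
      have hk := hkey ε hε x
      have hFt := hFeq ε hε x
      rw [hk]
      rw [show F ε x - p₁ x = p₁ x / (p₁ x / F ε x) - p₁ x by rw [← hFt]]
      have key : ∀ (t φ e P : ℝ), t ≠ 0 → φ ≠ 0 → e ≠ 0 →
          P / t * ((1 - t) / (e * φ)) * φ = (P / t - P) / e := by
        intro t φ e P ht hφ he
        field_simp
      exact key _ _ _ _ ht1 hφpos.ne' (ne_of_gt hε)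
  -- measurability of F ε
  have hψ₁ : Measurable (fun y : ℝ => φ₁ (max y 0)) := by
    apply Monotone.measurable
    intro a b hab
    exact hmono₁ (mem_Ici.2 (le_max_right a 0)) (mem_Ici.2 (le_max_right b 0))
      (max_le_max hab le_rfl)
  have hψ₂ : Measurable (fun y : ℝ => φ₂ (max y 0)) := by
    apply Monotone.measurable
    intro a b hab
    exact hmono₂ (mem_Ici.2 (le_max_right a 0)) (mem_Ici.2 (le_max_right b 0))
      (max_le_max hab le_rfl)
  have hFmeas : ∀ ε : ℝ, 0 < ε → Measurable (F ε) := by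
    intro ε hε
    apply measurable_of_Iic
    intro c
    rcases le_or_gt c 0 with hc | hc
    · have hem : F ε ⁻¹' Iic c = ∅ := by
        ext x
        simp only [mem_preimage, mem_Iic, mem_empty_iff_false, iff_false, not_le]
        exact lt_of_le_of_lt hc (hFpos ε hε x)
      rw [hem]
      exact MeasurableSet.empty
    · have hset : F ε ⁻¹' Iic c =
          {x | φ₁ (max (p₁ x / c) 0) + ε * φ₂ (max (p₂ x / c) 0) ≤ 1} := by
        ext x
        have hmax1 : max (p₁ x / c) 0 = p₁ x / c :=
          max_eq_left (div_nonneg (hp₁0 x).le hc.le)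
        have hmax2 : max (p₂ x / c) 0 = p₂ x / c :=
          max_eq_left (div_nonneg (hp₂0 x) hc.le)
        simp only [mem_preimage, mem_Iic, mem_setOf_eq, hmax1, hmax2]
        constructor
        · intro hFc
          have h1 : p₁ x / c ≤ p₁ x / F ε x :=
            div_le_div_of_nonneg_left (hp₁0 x).le (hFpos ε hε x) hFc
          have h2 : φ₁ (p₁ x / c) ≤ φ₁ (p₁ x / F ε x) :=
            hmono₁ (div_nonneg (hp₁0 x).le hc.le) (le_of_lt (htpos ε hε x)) h1
          have h3 : p₂ x / c ≤ p₂ x / F ε x :=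
            div_le_div_of_nonneg_left (hp₂0 x) (hFpos ε hε x) hFc
          have h4 : φ₂ (p₂ x / c) ≤ φ₂ (p₂ x / F ε x) :=
            hmono₂ (div_nonneg (hp₂0 x) hc.le)
              (div_nonneg (hp₂0 x) (hFpos ε hε x).le) h3
          have h5 := mul_le_mul_of_nonneg_left h4 hε.le
          have := heq ε hε x
          linarith
        · intro hsum
          by_contra hcon
          push_neg at hcon
          have h1 : p₁ x / F ε x < p₁ x / c :=
            div_lt_div_of_pos_left (hp₁0 x) hc hcon
          have h2 : φ₁ (p₁ x / F ε x) < φ₁ (p₁ x / c) :=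
            hm₁ (le_of_lt (htpos ε hε x)) (le_of_lt (div_pos (hp₁0 x) hc)) h1
          have h3 : p₂ x / F ε x ≤ p₂ x / c :=
            div_le_div_of_nonneg_left (hp₂0 x) hc hcon.le
          have h4 : φ₂ (p₂ x / F ε x) ≤ φ₂ (p₂ x / c) :=
            hmono₂ (div_nonneg (hp₂0 x) (hFpos ε hε x).le)
              (div_nonneg (hp₂0 x) hc.le) h3
          have h5 := mul_le_mul_of_nonneg_left h4 hε.le
          have := heq ε hε x
          linarith
      rw [hset]
      apply measurableSet_le _ measurable_const
      exact (hψ₁.comp (hp₁m.div_const c)).add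
        (measurable_const.mul (hψ₂.comp (hp₂m.div_const c)))
  -- slope lower bound near 1
  have hslope : Tendsto (slope φ₁ 1) (𝓝[<] (1:ℝ)) (𝓝 d) := by
    have := hasDerivWithinAt_iff_tendsto_slope.1 hderiv
    rwa [show (Iio (1:ℝ)) \ {1} = Iio 1 by
      rw [diff_singleton_eq_self]; simp] at this
  obtain ⟨l, hl1, hlsub⟩ : ∃ l ∈ Iio (1:ℝ), Ioo l 1 ⊆ {y | d / 2 < slope φ₁ 1 y} := by
    have h := hslope (Ioi_mem_nhds (by linarith : d / 2 < d))
    obtain ⟨l, hl1, hsub⟩ := mem_nhdsLT_iff_exists_Ioo_subset.1 h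
    exact ⟨l, hl1, fun y hy => hsub hy⟩
  set b : ℝ := max l (1/2) with hbdef
  have hb1 : b < 1 := max_lt hl1 (by norm_num)
  have hbhalf : (1/2 : ℝ) ≤ b := le_max_right _ _
  have hb0 : (0:ℝ) ≤ b := le_trans (by norm_num) hbhalf
  have hφb : φ₁ b < 1 := by
    have := hm₁ (mem_Ici.2 hb0) (mem_Ici.2 zero_le_one) hb1
    rwa [h11] at this
  have hφ₂a₁ : 0 ≤ φ₂ a₁ := hφ₂nn a₁ ha₁.le
  set ε₀ : ℝ := (1 - φ₁ b) / (φ₂ a₁ + 1) with hε₀def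
  have hε₀ : 0 < ε₀ := div_pos (by linarith) (by linarith)
  -- uniform bound on the difference quotient
  have hbnd : ∀ ε ∈ Ioo (0:ℝ) ε₀, ∀ x ∈ A,
      (F ε x - p₁ x) / ε ≤ 4 / d * φ₂ a₁ * p₁ x := by
    rintro ε ⟨hε0, hεlt⟩ x hx
    have hra : p₂ x / p₁ x ≤ a₁ := (hbound x hx).le
    have hφa : φ₂ (p₂ x / F ε x) ≤ φ₂ a₁ :=
      hmono₂ (div_nonneg (hp₂0 x) (hFpos ε hε0 x).le) (mem_Ici.2 ha₁.le)
        (le_trans (hdivle ε hε0 x) hra)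
    have hεφ : ε * φ₂ (p₂ x / F ε x) < 1 - φ₁ b := by
      calc ε * φ₂ (p₂ x / F ε x) ≤ ε * φ₂ a₁ :=
            mul_le_mul_of_nonneg_left hφa hε0.le
        _ ≤ ε * (φ₂ a₁ + 1) := by nlinarith
        _ < ε₀ * (φ₂ a₁ + 1) := mul_lt_mul_of_pos_right hεlt (by linarith)
        _ = 1 - φ₁ b := by rw [hε₀def, div_mul_cancel₀ _ (by linarith : φ₂ a₁ + 1 ≠ 0)]
    have hφt : φ₁ b < φ₁ (p₁ x / F ε x) := by
      have := hkey ε hε0 x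
      linarith
    have htb : b < p₁ x / F ε x := by
      by_contra hcon
      push_neg at hcon
      exact absurd (hmono₁ (le_of_lt (htpos ε hε0 x)) (mem_Ici.2 hb0) hcon)
        (not_le.2 hφt)
    have h1t : 1 - p₁ x / F ε x ≤ 2 / d * (1 - φ₁ (p₁ x / F ε x)) := by
      rcases eq_or_lt_of_le (htle1 ε hε0 x) with ht1 | ht1
      · rw [ht1, h11]
        simp
      · have hmem : p₁ x / F ε x ∈ Ioo l 1 :=
          ⟨lt_of_le_of_lt (le_max_left _ _) htb, ht1⟩
        have hsl : d / 2 < slope φ₁ 1 (p₁ x / F ε x) := hlsub hmem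
        rw [slope_def_field, h11] at hsl
        have hneg : p₁ x / F ε x - 1 < 0 := by linarith
        rw [lt_div_iff_of_neg hneg] at hsl
        have h2 : d / 2 * (1 - p₁ x / F ε x) ≤ 1 - φ₁ (p₁ x / F ε x) := by linarith
        calc 1 - p₁ x / F ε x
            = 2 / d * (d / 2 * (1 - p₁ x / F ε x)) := by field_simp
          _ ≤ 2 / d * (1 - φ₁ (p₁ x / F ε x)) :=
              mul_le_mul_of_nonneg_left h2 (by positivity)
    -- assemble the bound
    have e1 : F ε x - p₁ x = p₁ x * (1 - p₁ x / F ε x) / (p₁ x / F ε x) := by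
      rw [eq_div_iff (htpos ε hε0 x).ne']
      field_simp [(hFpos ε hε0 x).ne']
    have e2 : p₁ x * (1 - p₁ x / F ε x) ≤ p₁ x * (2 / d * (ε * φ₂ a₁)) := by
      apply mul_le_mul_of_nonneg_left _ (hp₁0 x).le
      calc 1 - p₁ x / F ε x ≤ 2 / d * (1 - φ₁ (p₁ x / F ε x)) := h1t
        _ = 2 / d * (ε * φ₂ (p₂ x / F ε x)) := by rw [hkey ε hε0 x]
        _ ≤ 2 / d * (ε * φ₂ a₁) := by
            apply mul_le_mul_of_nonneg_left _ (by positivity)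
            exact mul_le_mul_of_nonneg_left hφa hε0.le
    have e3 : (1/2 : ℝ) * ε ≤ (p₁ x / F ε x) * ε :=
      mul_le_mul_of_nonneg_right (le_trans hbhalf htb.le) hε0.le
    have e4 : p₁ x * (2 / d * (ε * φ₂ a₁)) / ((1/2) * ε) = 4 / d * φ₂ a₁ * p₁ x := by
      field_simp
      ring
    calc (F ε x - p₁ x) / ε
        = p₁ x * (1 - p₁ x / F ε x) / ((p₁ x / F ε x) * ε) := by
          rw [e1, div_div]
      _ ≤ p₁ x * (2 / d * (ε * φ₂ a₁)) / ((1/2) * ε) := by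
          apply div_le_div₀
            (mul_nonneg (hp₁0 x).le
              (mul_nonneg (by positivity) (mul_nonneg hε0.le hφ₂a₁))) e2
            (by positivity) e3
      _ = 4 / d * φ₂ a₁ * p₁ x := e4
  have hqnn : ∀ ε : ℝ, 0 < ε → ∀ x, 0 ≤ (F ε x - p₁ x) / ε :=
    fun ε hε x => div_nonneg (sub_nonneg.2 (hFge ε hε x)) hε.le
  -- dominated convergence
  have hbig := MeasureTheory.tendsto_integral_filter_of_dominated_convergence
      (μ := μ.restrict A) (l := 𝓝[>] (0:ℝ))
      (F := fun ε x => (F ε x - p₁ x) / ε)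
      (f := fun x => d⁻¹ * (φ₂ (p₂ x / p₁ x) * p₁ x))
      (bound := fun x => 4 / d * φ₂ a₁ * p₁ x)
      (by
        filter_upwards [self_mem_nhdsWithin] with ε hε
        exact (((hFmeas ε hε).sub hp₁m).div_const ε).aestronglyMeasurable)
      (by
        filter_upwards [Ioo_mem_nhdsGT_of_mem ⟨le_refl (0:ℝ), hε₀⟩] with ε hε
        filter_upwards [ae_restrict_mem hA] with x hx
        rw [Real.norm_eq_abs, abs_of_nonneg (hqnn ε hε.1 x)]
        exact hbnd ε hε x hx)
      (hp₁i.const_mul _)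
      (Eventually.of_forall fun x => hptlim x)
  -- rewrite the limit
  rw [MeasureTheory.integral_const_mul] at hbig
  apply hbig.congr'
  filter_upwards [Ioo_mem_nhdsGT_of_mem ⟨le_refl (0:ℝ), hε₀⟩] with ε hε
  obtain ⟨hε0, hεlt⟩ := hε
  have hintsub : IntegrableOn (fun x => F ε x - p₁ x) A μ := by
    apply Integrable.mono (g := fun x => ε * (4 / d * φ₂ a₁ * p₁ x))
        ((hp₁i.const_mul _).const_mul ε)
        (((hFmeas ε hε0).sub hp₁m).aestronglyMeasurable)
    filter_upwards [ae_restrict_mem hA] with x hx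
    rw [Real.norm_eq_abs, Real.norm_eq_abs, Pi.sub_apply,
      abs_of_nonneg (sub_nonneg.2 (hFge ε hε0 x)),
      abs_of_nonneg (mul_nonneg hε0.le
        (mul_nonneg (mul_nonneg (by positivity) hφ₂a₁) (hp₁0 x).le))]
    rw [mul_comm ε]
    exact (div_le_iff₀ hε0).1 (hbnd ε ⟨hε0, hεlt⟩ x hx)
  have hintF : IntegrableOn (F ε) A μ := by
    have h := hintsub.add hp₁i
    have heqf : (fun x => F ε x - p₁ x) + p₁ = F ε := by
      funext x; simp
    rwa [heqf] at h
  rw [MeasureTheory.integral_div, integral_sub hintF hp₁i]
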